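/- The function f(x) = exp(x²/2) Φ(x) is strictly increasing on ℝ. -/

import Mathlib

open Real MeasureTheory Set Filter

lemma hg_int : Integrable (fun y : ℝ => Real.exp (-y ^ 2 / 2)) := by
  have h := integrable_exp_neg_mul_sq (by norm_num : (0:ℝ) < 1/2)
  convert h using 2 with y
  ring_nf

lemma hg_cont : Continuous (fun y : ℝ => Real.exp (-y ^ 2 / 2)) := by continuity

lemma hyg_int : Integrable (fun y : ℝ => y * Real.exp (-y ^ 2 / 2)) := by
  have h := integrable_mul_exp_neg_mul_sq (by norm_num : (0:ℝ) < 1/2)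
  convert h using 2 with y
  ring_nf

noncomputable def Phi (x : ℝ) : ℝ :=
  (Real.sqrt (2 * Real.pi))⁻¹ * ∫ y in Set.Iic x, Real.exp (-y ^ 2 / 2)

lemma Phi_hasDerivAt (x : ℝ) :
    HasDerivAt Phi ((Real.sqrt (2 * Real.pi))⁻¹ * Real.exp (-x ^ 2 / 2)) x := by
  have key : ∀ t : ℝ, Phi t = (Real.sqrt (2 * Real.pi))⁻¹ *
      ((∫ y in Set.Iic (0:ℝ), Real.exp (-y ^ 2 / 2)) +
        ∫ y in (0:ℝ)..t, Real.exp (-y ^ 2 / 2)) := by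
    intro t
    unfold Phi
    rw [← intervalIntegral.integral_Iic_sub_Iic hg_int.integrableOn hg_int.integrableOn]
    ring
  have h1 : HasDerivAt (fun t : ℝ => ∫ y in (0:ℝ)..t, Real.exp (-y ^ 2 / 2))
      (Real.exp (-x ^ 2 / 2)) x :=
    intervalIntegral.integral_hasDerivAt_right hg_int.intervalIntegrable
      (hg_cont.stronglyMeasurable.stronglyMeasurableAtFilter) hg_cont.continuousAt
  have h2 := ((h1.const_add (∫ y in Set.Iic (0:ℝ), Real.exp (-y ^ 2 / 2))).const_mul
      (Real.sqrt (2 * Real.pi))⁻¹)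
  exact h2.congr_of_eventuallyEq (Filter.Eventually.of_forall fun t => (key t))

lemma key_integral (x : ℝ) :
    ∫ y in Set.Iic x, (-y) * Real.exp (-y ^ 2 / 2) = Real.exp (-x ^ 2 / 2) := by
  have hderiv : ∀ y ∈ Set.Iio x, HasDerivAt (fun y : ℝ => Real.exp (-y ^ 2 / 2))
      ((-y) * Real.exp (-y ^ 2 / 2)) y := by
    intro y _
    have h0 : HasDerivAt (fun y : ℝ => y ^ 2) (2 * y) y := by simpa using hasDerivAt_pow 2 y
    have h : HasDerivAt (fun y : ℝ => -y ^ 2 / 2) (-y) y := by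
      have := h0.neg.div_const 2
      exact this.congr_deriv (by ring)
    have := (Real.hasDerivAt_exp (-y ^ 2 / 2)).comp y h
    exact this.congr_deriv (by ring)
  have hint : IntegrableOn (fun y : ℝ => (-y) * Real.exp (-y ^ 2 / 2)) (Set.Iic x) :=
    (hyg_int.neg.congr (Filter.Eventually.of_forall (by intro y; simp [neg_mul]))).integrableOn
  have htend : Tendsto (fun y : ℝ => Real.exp (-y ^ 2 / 2)) atBot (nhds 0) := by
    apply Real.tendsto_exp_atBot.comp
    have h1 : Tendsto (fun y : ℝ => y ^ 2) atBot atTop := by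
      have h := (tendsto_pow_atTop (by norm_num : 2 ≠ 0)).comp (tendsto_abs_atBot_atTop (G := ℝ))
      refine h.congr fun y => ?_
      simp [sq_abs]
    have h2 : Tendsto (fun y : ℝ => -y ^ 2) atBot atBot := tendsto_neg_atTop_atBot.comp h1
    exact h2.atBot_div_const (by norm_num)
  have := MeasureTheory.integral_Iic_of_hasDerivAt_of_tendsto
    (hg_cont.continuousWithinAt) hderiv hint htend
  simpa using this

lemma mill (x : ℝ) (hx : x < 0) :
    (-x) * ∫ y in Set.Iic x, Real.exp (-y ^ 2 / 2) < Real.exp (-x ^ 2 / 2) := by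
  rw [← key_integral x, ← MeasureTheory.integral_const_mul]
  have hint1 : IntegrableOn (fun y : ℝ => (-x) * Real.exp (-y ^ 2 / 2)) (Set.Iic x) :=
    (hg_int.const_mul (-x)).integrableOn
  have hint2 : IntegrableOn (fun y : ℝ => (-y) * Real.exp (-y ^ 2 / 2)) (Set.Iic x) :=
    (hyg_int.neg.congr (Filter.Eventually.of_forall (by intro y; simp [neg_mul]))).integrableOn
  have hdiff : 0 < ∫ y in Set.Iic x, ((-y) * Real.exp (-y ^ 2 / 2)
      - (-x) * Real.exp (-y ^ 2 / 2)) := by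
    rw [MeasureTheory.setIntegral_pos_iff_support_of_nonneg_ae]
    · refine lt_of_lt_of_le (b := MeasureTheory.volume (Set.Iio x)) ?_ (measure_mono ?_)
      · show (0:ENNReal) < MeasureTheory.volume (Set.Iio x)
        rw [Real.volume_Iio]; exact ENNReal.zero_lt_top
      · intro y hy
        refine ⟨?_, le_of_lt (Set.mem_Iio.mp hy)⟩
        simp only [Function.mem_support]
        have hg : 0 < Real.exp (-y ^ 2 / 2) := Real.exp_pos _
        have he : (-y) * Real.exp (-y ^ 2 / 2) - (-x) * Real.exp (-y ^ 2 / 2)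
            = (x - y) * Real.exp (-y ^ 2 / 2) := by ring
        rw [he]
        have : (0:ℝ) < (x - y) * Real.exp (-y ^ 2 / 2) := by
          apply mul_pos _ hg
          linarith [hy.out]
        exact ne_of_gt this
    · filter_upwards [MeasureTheory.ae_restrict_mem measurableSet_Iic] with y hy
      have hg : (0:ℝ) ≤ Real.exp (-y ^ 2 / 2) := (Real.exp_pos _).le
      have hyx : y ≤ x := hy
      show (0:ℝ) ≤ (-y) * Real.exp (-y ^ 2 / 2) - (-x) * Real.exp (-y ^ 2 / 2)
      nlinarith
    · exact hint2.sub hint1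
  have hsub := MeasureTheory.integral_sub hint2 hint1
  rw [hsub] at hdiff
  linarith

/-- The function `f(x) = exp(x²/2) Φ(x)` is strictly increasing on ℝ. -/
theorem f_strictMono : StrictMono (fun x : ℝ => Real.exp (x ^ 2 / 2) * Phi x) := by
  apply strictMono_of_deriv_pos
  intro x
  set c : ℝ := (Real.sqrt (2 * Real.pi))⁻¹ with hc
  have hcpos : 0 < c := by
    rw [hc]
    exact inv_pos.mpr (Real.sqrt_pos.mpr (by positivity))
  have hE : HasDerivAt (fun x : ℝ => Real.exp (x ^ 2 / 2))
      (x * Real.exp (x ^ 2 / 2)) x := by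
    have h0 : HasDerivAt (fun x : ℝ => x ^ 2) (2 * x) x := by simpa using hasDerivAt_pow 2 x
    have h : HasDerivAt (fun x : ℝ => x ^ 2 / 2) x x := by
      have := h0.div_const 2
      exact this.congr_deriv (by ring)
    have := (Real.hasDerivAt_exp (x ^ 2 / 2)).comp x h
    exact this.congr_deriv (by ring)
  have hf : HasDerivAt (fun x : ℝ => Real.exp (x ^ 2 / 2) * Phi x)
      (x * Real.exp (x ^ 2 / 2) * Phi x + c) x := by
    have hmul := hE.mul (Phi_hasDerivAt x)
    have hone : Real.exp (x ^ 2 / 2) * (c * Real.exp (-x ^ 2 / 2)) = c := by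
      rw [mul_comm c, ← mul_assoc, ← Real.exp_add]
      rw [show x ^ 2 / 2 + -x ^ 2 / 2 = 0 by ring, Real.exp_zero, one_mul]
    rw [hone] at hmul
    exact hmul
  rw [hf.deriv]
  rcases le_or_gt 0 x with hx | hx
  · have hPhi : 0 ≤ Phi x := by
      unfold Phi
      apply mul_nonneg (by positivity)
      exact MeasureTheory.integral_nonneg fun y => (Real.exp_pos _).le
    have : 0 ≤ x * Real.exp (x ^ 2 / 2) * Phi x := by positivity
    linarith
  · have hmill := mill x hx
    set I : ℝ := ∫ y in Set.Iic x, Real.exp (-y ^ 2 / 2) with hI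
    have hPhi : Phi x = c * I := rfl
    have hEpos : 0 < Real.exp (x ^ 2 / 2) := Real.exp_pos _
    have hone : Real.exp (x ^ 2 / 2) * Real.exp (-x ^ 2 / 2) = 1 := by
      rw [← Real.exp_add, show x ^ 2 / 2 + -x ^ 2 / 2 = 0 by ring, Real.exp_zero]
    rw [hPhi]
    have h2 : (-x) * I * Real.exp (x ^ 2 / 2) < 1 := by
      calc (-x) * I * Real.exp (x ^ 2 / 2)
          < Real.exp (-x ^ 2 / 2) * Real.exp (x ^ 2 / 2) :=
            mul_lt_mul_of_pos_right hmill hEpos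
        _ = 1 := by rw [mul_comm]; exact hone
    nlinarith
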